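/- arXiv:2307.10026 — 2 statements merged into one kernel-verified Lean document; each statement's English description precedes it below -/
import Mathlib

section
/- For every linear predictor of the form w = [w1, w2, 0_d] ∈ ℝ^{3d} with (w1, w2) ≠ (0, 0), the accuracy of w on the context-c2 distribution equals 0.5 · erfc( −((w1 − w2)ᵀμ) / (σ·√(2(‖w1‖₂² + (1/γ)‖w2‖₂²))) ). -/
open MeasureTheory ProbabilityTheory Real Filter
open scoped ENNReal NNReal

noncomputable section

/-- Complementary error function `erfc x = (2/√π) ∫_x^∞ e^{−t²} dt`. -/
def erfc (x : ℝ) : ℝ := 2 / Real.sqrt Real.pi * ∫ t in Set.Ioi x, Real.exp (-t ^ 2)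

/-- A vector in `ℝ^d`. -/
abbrev Vec (d : ℕ) := Fin d → ℝ

/-- The input space `ℝ^{3d}`, viewed as three blocks `x = [x1, x2, x3]`. -/
abbrev Inp (d : ℕ) := Vec d × Vec d × Vec d

/-- Euclidean dot product on `ℝ^d`. -/
def dot {d : ℕ} (v w : Vec d) : ℝ := ∑ i, v i * w i

/-- Euclidean norm on `ℝ^d`. -/
def vnorm {d : ℕ} (v : Vec d) : ℝ := Real.sqrt (∑ i, v i ^ 2)

/-- Euclidean norm on the full input space `ℝ^{3d}`. -/
def xnorm {d : ℕ} (x : Inp d) : ℝ :=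
  Real.sqrt ((∑ i, x.1 i ^ 2) + (∑ i, x.2.1 i ^ 2) + ∑ i, x.2.2 i ^ 2)

/-- Value `wᵀx` of the linear predictor `w` at input `x`. -/
def pred {d : ℕ} (w x : Inp d) : ℝ := dot w.1 x.1 + dot w.2.1 x.2.1 + dot w.2.2 x.2.2

/-- Isotropic Gaussian `N(m, v·I_d)` on `ℝ^d` (product of coordinate Gaussians). -/
def gaussVec (d : ℕ) (m : Vec d) (v : ℝ) : Measure (Vec d) :=
  Measure.pi fun i => gaussianReal (m i) (Real.toNNReal v)

/-- Conditional law of `x` given the label `y` in context `c1`: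
`x1 ~ N(μy, σ²I)`, `x2 ~ N(μy, γσ²I)`, `x3 ~ N(μ, η²I)`, independent blocks. -/
def condX1 (d : ℕ) (μ : Vec d) (σ γ η : ℝ) (y : ℝ) : Measure (Inp d) :=
  (gaussVec d (fun i => μ i * y) (σ ^ 2)).prod
    ((gaussVec d (fun i => μ i * y) (γ * σ ^ 2)).prod
      (gaussVec d μ (η ^ 2)))

/-- Conditional law of `x` given the label `y` in context `c2`:
`x1 ~ N(μy, σ²I)`, `x2 ~ N(−μy, (σ²/γ)I)`, `x3 ~ N(−μ, η²I)`, independent blocks. -/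
def condX2 (d : ℕ) (μ : Vec d) (σ γ η : ℝ) (y : ℝ) : Measure (Inp d) :=
  (gaussVec d (fun i => μ i * y) (σ ^ 2)).prod
    ((gaussVec d (fun i => -μ i * y) (σ ^ 2 / γ)).prod
      (gaussVec d (fun i => -μ i) (η ^ 2)))

/-- Joint law of `(x, y)`: `y` uniform on `{−1, 1}`, then `x ~ cond y`. -/
def jointOf {d : ℕ} (cond : ℝ → Measure (Inp d)) : Measure (Inp d × ℝ) :=
  (2 : ℝ≥0∞)⁻¹ • (cond 1).prod (Measure.dirac (1 : ℝ))
    + (2 : ℝ≥0∞)⁻¹ • (cond (-1)).prod (Measure.dirac (-1 : ℝ))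

/-- The context-`c1` distribution over `(x, y)`. -/
def Pc1 (d : ℕ) (μ : Vec d) (σ γ η : ℝ) : Measure (Inp d × ℝ) :=
  jointOf (condX1 d μ σ γ η)

/-- The context-`c2` distribution over `(x, y)`. -/
def Pc2 (d : ℕ) (μ : Vec d) (σ γ η : ℝ) : Measure (Inp d × ℝ) :=
  jointOf (condX2 d μ σ γ η)

/-- Accuracy `Acc_P(w) = P(sign(wᵀx) = y)` of linear predictor `w` under joint law `P`. -/
def AccP {d : ℕ} (P : Measure (Inp d × ℝ)) (w : Inp d) : ℝ :=
  (P {p | Real.sign (pred w p.1) = p.2}).toReal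

/-- Norm-bounded linear predictors `W1 = {w ∈ ℝ^{3d} : ‖w‖₂ ≤ 1}`. -/
def W1 (d : ℕ) : Set (Inp d) := {w | xnorm w ≤ 1}

/-- Population exponential loss `E_P[exp(−y·wᵀx)]`. -/
def expLoss {d : ℕ} (P : Measure (Inp d × ℝ)) (w : Inp d) : ℝ :=
  ∫ p, Real.exp (-(p.2 * pred w p.1)) ∂P

end


lemma gaussianPDFReal_convolution (m₁ m₂ : ℝ) (v₁ v₂ : ℝ≥0) (h₁ : v₁ ≠ 0) (h₂ : v₂ ≠ 0)
    (z : ℝ) :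
    ∫ x, gaussianPDFReal m₁ v₁ x * gaussianPDFReal m₂ v₂ (z - x)
      = gaussianPDFReal (m₁ + m₂) (v₁ + v₂) z := by
  have hv₁ : (0:ℝ) < v₁ := lt_of_le_of_ne v₁.coe_nonneg (by exact_mod_cast (Ne.symm h₁))
  have hv₂ : (0:ℝ) < v₂ := lt_of_le_of_ne v₂.coe_nonneg (by exact_mod_cast (Ne.symm h₂))
  set a : ℝ := ((v₁:ℝ) + v₂) / (2 * v₁ * v₂) with ha_def
  have ha : 0 < a := by positivity
  set b : ℝ := (m₁ * v₂ + (z - m₂) * v₁) / (v₁ + v₂) with hb_def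
  have key : ∀ x : ℝ, gaussianPDFReal m₁ v₁ x * gaussianPDFReal m₂ v₂ (z - x)
      = gaussianPDFReal (m₁ + m₂) (v₁ + v₂) z * ((√(π / a))⁻¹ * rexp (-a * (x - b)^2)) := by
    intro x
    rw [gaussianPDFReal, gaussianPDFReal, gaussianPDFReal]
    have hconst : (√(2 * π * v₁))⁻¹ * (√(2 * π * v₂))⁻¹
        = (√(2 * π * ((v₁:ℝ) + v₂)))⁻¹ * (√(π / a))⁻¹ := by
      rw [← mul_inv, ← mul_inv, ← Real.sqrt_mul (by positivity), ← Real.sqrt_mul (by positivity)]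
      congr 1
      rw [ha_def]
      field_simp
    have hexp : rexp (-(x - m₁)^2 / (2 * v₁)) * rexp (-(z - x - m₂)^2 / (2 * v₂))
        = rexp (-(z - (m₁ + m₂))^2 / (2 * ((v₁:ℝ) + v₂))) * rexp (-a * (x - b)^2) := by
      rw [← Real.exp_add, ← Real.exp_add]
      congr 1
      rw [ha_def, hb_def]
      field_simp
      ring
    push_cast
    calc (√(2 * π * v₁))⁻¹ * rexp (-(x - m₁)^2 / (2 * v₁))
          * ((√(2 * π * v₂))⁻¹ * rexp (-(z - x - m₂)^2 / (2 * v₂)))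
        = ((√(2 * π * v₁))⁻¹ * (√(2 * π * v₂))⁻¹)
          * (rexp (-(x - m₁)^2 / (2 * v₁)) * rexp (-(z - x - m₂)^2 / (2 * v₂))) := by ring
      _ = _ := by rw [hconst, hexp]; ring
  simp_rw [key]
  rw [integral_const_mul, integral_const_mul, integral_sub_right_eq_self (fun x => rexp (-a * x^2)) b,
    integral_gaussian, inv_mul_cancel₀ (by positivity), mul_one]

lemma gaussianPDFReal_le (m : ℝ) (v : ℝ≥0) (x : ℝ) :
    gaussianPDFReal m v x ≤ (√(2 * π * v))⁻¹ := by
  rw [gaussianPDFReal]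
  calc (√(2 * π * v))⁻¹ * rexp (-(x - m) ^ 2 / (2 * v))
      ≤ (√(2 * π * v))⁻¹ * 1 :=
        mul_le_mul_of_nonneg_left
          (Real.exp_le_one_iff.2 (div_nonpos_of_nonpos_of_nonneg (neg_nonpos.2 (sq_nonneg _)) (by positivity)))
          (by positivity)
    _ = _ := mul_one _

lemma gaussianReal_conv (m₁ m₂ : ℝ) (v₁ v₂ : ℝ≥0) :
    Measure.map (fun p : ℝ × ℝ => p.1 + p.2)
        ((gaussianReal m₁ v₁).prod (gaussianReal m₂ v₂))
      = gaussianReal (m₁ + m₂) (v₁ + v₂) := by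
  by_cases h₂ : v₂ = 0
  · subst h₂
    rw [gaussianReal_zero_var, Measure.prod_dirac,
      Measure.map_map measurable_add (measurable_prodMk_right : Measurable fun x : ℝ => (x, m₂))]
    have : ((fun p : ℝ × ℝ => p.1 + p.2) ∘ fun x : ℝ => (x, m₂)) = (· + m₂) := rfl
    rw [this, gaussianReal_map_add_const m₂, add_zero]
  by_cases h₁ : v₁ = 0
  · subst h₁
    rw [gaussianReal_zero_var, Measure.dirac_prod,
      Measure.map_map measurable_add (measurable_prodMk_left : Measurable (Prod.mk m₁ : ℝ → ℝ × ℝ))]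
    have : ((fun p : ℝ × ℝ => p.1 + p.2) ∘ Prod.mk m₁) = (m₁ + ·) := rfl
    rw [this, gaussianReal_map_const_add m₁, zero_add, add_comm m₂ m₁]
  -- main case
  have hpdf : ∀ x z : ℝ, gaussianPDF (m₂ + x) v₂ z = gaussianPDF m₂ v₂ (z - x) := by
    intro x z
    rw [gaussianPDF, gaussianPDF, gaussianPDFReal_sub]
  have hmeas2 : Measurable (Function.uncurry fun x z => gaussianPDF m₂ v₂ (z - x)) :=
    (measurable_gaussianPDF m₂ v₂).comp (measurable_snd.sub measurable_fst)
  ext s hs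
  rw [Measure.map_apply measurable_add hs, Measure.prod_apply (measurable_add hs)]
  have h1 : ∀ x : ℝ, (gaussianReal m₂ v₂) (Prod.mk x ⁻¹' ((fun p : ℝ × ℝ => p.1 + p.2) ⁻¹' s))
      = ∫⁻ z in s, gaussianPDF m₂ v₂ (z - x) := by
    intro x
    have hset : Prod.mk x ⁻¹' ((fun p : ℝ × ℝ => p.1 + p.2) ⁻¹' s) = (fun y => x + y) ⁻¹' s := rfl
    rw [hset, ← Measure.map_apply (measurable_const_add x) hs, gaussianReal_map_const_add,
      gaussianReal_apply _ h₂]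
    exact lintegral_congr fun z => hpdf x z
  rw [lintegral_congr h1, gaussianReal_of_var_ne_zero m₁ h₁,
    lintegral_withDensity_eq_lintegral_mul _ (measurable_gaussianPDF _ _)
      (Measurable.lintegral_prod_right hmeas2)]
  have h2 : (fun x => gaussianPDF m₁ v₁ x * ∫⁻ z in s, gaussianPDF m₂ v₂ (z - x))
      = fun x => ∫⁻ z in s, gaussianPDF m₁ v₁ x * gaussianPDF m₂ v₂ (z - x) := by
    funext x
    have hmeas : Measurable fun z : ℝ => gaussianPDF m₂ v₂ (z - x) :=
      (measurable_gaussianPDF m₂ v₂).comp (measurable_id.sub measurable_const)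
    exact (lintegral_const_mul (gaussianPDF m₁ v₁ x)
      (f := fun z => gaussianPDF m₂ v₂ (z - x)) hmeas).symm
  rw [Pi.mul_def, h2, lintegral_lintegral_swap]
  swap
  · exact (((measurable_gaussianPDF m₁ v₁).comp measurable_fst).mul
      ((measurable_gaussianPDF m₂ v₂).comp (measurable_snd.sub measurable_fst))).aemeasurable
  have h3 : ∀ z : ℝ, (∫⁻ x, gaussianPDF m₁ v₁ x * gaussianPDF m₂ v₂ (z - x))
      = gaussianPDF (m₁ + m₂) (v₁ + v₂) z := by
    intro z
    have hint : Integrable (fun x => gaussianPDFReal m₂ v₂ (z - x) * gaussianPDFReal m₁ v₁ x) := by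
      refine Integrable.bdd_mul (integrable_gaussianPDFReal m₁ v₁)
        (((measurable_gaussianPDFReal m₂ v₂).comp (measurable_const.sub measurable_id)).aestronglyMeasurable)
        (c := (√(2 * π * v₂))⁻¹) (ae_of_all _ fun x => ?_)
      rw [Real.norm_eq_abs, abs_of_nonneg (gaussianPDFReal_nonneg _ _ _)]
      exact gaussianPDFReal_le _ _ _
    have : (fun x => gaussianPDF m₁ v₁ x * gaussianPDF m₂ v₂ (z - x))
        = fun x => ENNReal.ofReal (gaussianPDFReal m₂ v₂ (z - x) * gaussianPDFReal m₁ v₁ x) := by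
      funext x
      rw [gaussianPDF, gaussianPDF, ← ENNReal.ofReal_mul (gaussianPDFReal_nonneg _ _ _), mul_comm]
    rw [this, ← ofReal_integral_eq_lintegral_ofReal hint
      (ae_of_all _ fun x => mul_nonneg (gaussianPDFReal_nonneg _ _ _) (gaussianPDFReal_nonneg _ _ _))]
    simp_rw [mul_comm (gaussianPDFReal m₂ v₂ _)]
    rw [gaussianPDFReal_convolution m₁ m₂ v₁ v₂ h₁ h₂ z]
    rfl
  rw [lintegral_congr fun z => h3 z, ← gaussianReal_apply _ _ s]
  simp [h₁]

lemma map_add_of_gauss {α β : Type*} [MeasurableSpace α] [MeasurableSpace β]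
    (μ : Measure α) (ν : Measure β) [SFinite μ] [SFinite ν]
    {f : α → ℝ} {g : β → ℝ} (hf : Measurable f) (hg : Measurable g)
    {a b : ℝ} {u w : ℝ≥0} (hμ : μ.map f = gaussianReal a u) (hν : ν.map g = gaussianReal b w) :
    (μ.prod ν).map (fun p => f p.1 + g p.2) = gaussianReal (a + b) (u + w) := by
  have hcomp : (fun p : α × β => f p.1 + g p.2)
      = (fun q : ℝ × ℝ => q.1 + q.2) ∘ (Prod.map f g) := rfl
  rw [hcomp, ← Measure.map_map measurable_add (hf.prodMap hg),
    ← Measure.map_prod_map _ _ hf hg, hμ, hν, gaussianReal_conv]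

lemma map_sum_pi (n : ℕ) (c m : Fin n → ℝ) (v : ℝ≥0) :
    Measure.map (fun x : Fin n → ℝ => ∑ i, c i * x i)
        (Measure.pi fun i => gaussianReal (m i) v)
      = gaussianReal (∑ i, c i * m i) (Real.toNNReal (∑ i, (c i)^2) * v) := by
  induction n with
  | zero =>
      have h0 : (fun x : Fin 0 → ℝ => ∑ i, c i * x i) = fun _ => 0 := by
        funext x; simp
      rw [h0, Measure.map_const]
      simp
  | succ n ih =>
      have hmp := measurePreserving_piFinSuccAbove
        (fun i : Fin (n + 1) => gaussianReal (m i) v) 0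
      set G : ℝ × (Fin n → ℝ) → ℝ := fun p => (c 0) * p.1 + ∑ j, c j.succ * p.2 j with hG
      have he : (fun x : Fin (n + 1) → ℝ => ∑ i, c i * x i)
          = G ∘ (MeasurableEquiv.piFinSuccAbove (fun _ => ℝ) 0) := by
        funext x
        simp [G, MeasurableEquiv.piFinSuccAbove, Fin.sum_univ_succ, Fin.zero_succAbove, Fin.tail]
      have hGmeas : Measurable G :=
        (measurable_fst.const_mul _).add (Finset.measurable_sum _ fun j _ =>
          ((measurable_pi_apply j).comp measurable_snd).const_mul _)
      rw [he, ← Measure.map_map hGmeas (MeasurableEquiv.piFinSuccAbove _ 0).measurable,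
        hmp.map_eq]
      have htail : (Measure.pi fun j : Fin n =>
            gaussianReal (m ((0 : Fin (n+1)).succAbove j)) v)
          = Measure.pi fun j : Fin n => gaussianReal (m j.succ) v := by
        simp only [Fin.zero_succAbove]
      rw [htail]
      have h1 : (gaussianReal (m 0) v).map (fun t => c 0 * t)
          = gaussianReal (c 0 * m 0) (⟨(c 0)^2, sq_nonneg _⟩ * v) := by
        exact gaussianReal_map_const_mul (μ := m 0) (v := v) (c 0)
      have h2 := ih (fun j => c j.succ) (fun j => m j.succ)
      have := map_add_of_gauss (gaussianReal (m 0) v)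
        (Measure.pi fun j : Fin n => gaussianReal (m j.succ) v)
        (by fun_prop : Measurable fun t : ℝ => c 0 * t)
        (Finset.measurable_sum _ fun j _ => (measurable_pi_apply j).const_mul _)
        h1 h2
      refine this.trans ?_
      congr 1
      · rw [Fin.sum_univ_succ]
      · apply NNReal.coe_injective
        push_cast [NNReal.coe_mul, NNReal.coe_mk, Real.coe_toNNReal _ (Finset.sum_nonneg fun i _ => sq_nonneg (c i)),
          Real.coe_toNNReal _ (Finset.sum_nonneg fun (i : Fin n) _ => sq_nonneg (c i.succ))]
        rw [Fin.sum_univ_succ]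
        rw [show ((⟨(c 0)^2, sq_nonneg _⟩ * v : ℝ≥0) : ℝ) = (c 0)^2 * v from rfl]
        ring

lemma gaussianReal_Ioi_toReal (M : ℝ) (v : ℝ≥0) (hv : v ≠ 0) :
    ((gaussianReal M v) (Set.Ioi 0)).toReal
      = 0.5 * erfc (-M / Real.sqrt (2 * v)) := by
  have hvpos : (0:ℝ) < v := lt_of_le_of_ne v.coe_nonneg (by exact_mod_cast (Ne.symm hv))
  set c : ℝ := Real.sqrt (2 * v) with hc_def
  have hc : 0 < c := Real.sqrt_pos.2 (by positivity)
  set T : ℝ → ℝ := fun x => c⁻¹ * (x + -M) with hT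
  have hTmeas : Measurable T := (measurable_id.add_const _).const_mul _
  have hmap : (gaussianReal M v).map T = gaussianReal 0 (2:ℝ≥0)⁻¹ := by
    have h1 : (gaussianReal M v).map (· + -M) = gaussianReal 0 v := by
      rw [gaussianReal_map_add_const]; simp
    have hcomp : T = (fun x => c⁻¹ * x) ∘ (· + -M) := rfl
    rw [hcomp, ← Measure.map_map (by fun_prop : Measurable fun x : ℝ => c⁻¹ * x)
      (by fun_prop : Measurable fun x : ℝ => x + -M), h1, gaussianReal_map_const_mul]
    congr 1
    · simp
    · apply NNReal.coe_injective
      push_cast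
      rw [inv_pow, hc_def, Real.sq_sqrt (by positivity)]
      rw [mul_comm (2:ℝ) (v:ℝ), mul_inv]
      field_simp
  have hset : Set.Ioi (0:ℝ) = T ⁻¹' (Set.Ioi (c⁻¹ * -M)) := by
    ext x
    simp only [Set.mem_Ioi, Set.mem_preimage, hT]
    constructor
    · intro hx
      exact mul_lt_mul_of_pos_left (by linarith) (inv_pos.2 hc)
    · intro hx
      have := (mul_lt_mul_iff_right₀ (inv_pos.2 hc)).mp hx
      linarith
  rw [hset, ← Measure.map_apply hTmeas measurableSet_Ioi, hmap,
    gaussianReal_apply_eq_integral _ (by norm_num) _,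
    ENNReal.toReal_ofReal (integral_nonneg fun x => gaussianPDFReal_nonneg _ _ _)]
  have hpdf : ∀ x : ℝ, gaussianPDFReal 0 (2:ℝ≥0)⁻¹ x = (√π)⁻¹ * rexp (-x^2) := by
    intro x
    rw [gaussianPDFReal]
    norm_num
    rw [mul_comm ((Real.sqrt π)⁻¹), ← mul_assoc,
      mul_inv_cancel₀ (by positivity : (Real.sqrt 2) ≠ 0), one_mul]
  simp_rw [hpdf]
  rw [integral_const_mul, erfc]
  have hπ : (0:ℝ) < √π := Real.sqrt_pos.2 Real.pi_pos
  have harg : c⁻¹ * -M = -M / c := by field_simp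
  rw [harg]
  field_simp
  ring

lemma gaussianReal_neg_Iio (M : ℝ) (v : ℝ≥0) :
    gaussianReal (-M) v (Set.Iio 0) = gaussianReal M v (Set.Ioi 0) := by
  have h := gaussianReal_map_const_mul (μ := M) (v := v) (-1)
  have hv1 : (NNReal.mk ((-1:ℝ)^2) (sq_nonneg _)) = 1 := by
    apply NNReal.coe_injective; show ((-1:ℝ)^2) = ((1:ℝ≥0):ℝ); norm_num
  rw [hv1, one_mul] at h
  rw [show (-M) = (-1) * M by ring, ← h,
    Measure.map_apply (by fun_prop : Measurable fun x : ℝ => -1 * x) measurableSet_Iio]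
  congr 1
  ext x
  simp

lemma measurable_real_sign : Measurable Real.sign := by
  have h : Real.sign = fun r : ℝ => if r < 0 then (-1:ℝ) else if 0 < r then 1 else 0 :=
    funext fun r => rfl
  rw [h]
  exact Measurable.ite measurableSet_Iio measurable_const
    (Measurable.ite measurableSet_Ioi measurable_const measurable_const)

lemma real_sign_eq_one_iff {x : ℝ} : Real.sign x = 1 ↔ 0 < x := by
  constructor
  · intro h
    rcases lt_trichotomy x 0 with h' | h' | h'
    · rw [Real.sign_of_neg h'] at h; norm_num at h
    · rw [h', Real.sign_zero] at h; norm_num at h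
    · exact h'
  · exact Real.sign_of_pos

lemma real_sign_eq_neg_one_iff {x : ℝ} : Real.sign x = -1 ↔ x < 0 := by
  constructor
  · intro h
    rcases lt_trichotomy x 0 with h' | h' | h'
    · exact h'
    · rw [h', Real.sign_zero] at h; norm_num at h
    · rw [Real.sign_of_pos h'] at h; norm_num at h
  · exact Real.sign_of_neg

theorem accuracy_formula_context_c2 (d : ℕ) (hd : 1 ≤ d) (μ : Vec d) (hμ : μ ≠ 0)
    (σ γ η : ℝ) (hσ : 0 < σ) (hγ : 0 < γ) (hη : 0 < η)
    (w1 w2 : Vec d) (hw : ¬(w1 = 0 ∧ w2 = 0)) :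
    AccP (Pc2 d μ σ γ η) (w1, w2, (0 : Vec d)) =
      0.5 * erfc (-(dot (w1 - w2) μ) /
        (σ * Real.sqrt (2 * (vnorm w1 ^ 2 + (1 / γ) * vnorm w2 ^ 2)))) := by
  classical
  set w : Inp d := (w1, w2, (0 : Vec d)) with hw_def
  set S1 : ℝ := ∑ i, w1 i ^ 2 with hS1_def
  set S2 : ℝ := ∑ i, w2 i ^ 2 with hS2_def
  have hS1nonneg : 0 ≤ S1 := Finset.sum_nonneg fun i _ => sq_nonneg _
  have hS2nonneg : 0 ≤ S2 := Finset.sum_nonneg fun i _ => sq_nonneg _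
  set M : ℝ := dot (w1 - w2) μ with hM_def
  set V : ℝ≥0 := Real.toNNReal S1 * Real.toNNReal (σ^2)
      + Real.toNNReal S2 * Real.toNNReal (σ^2/γ) with hV_def
  -- measurability of pred w
  have hmeas1 : Measurable fun x1 : Vec d => ∑ i, w1 i * x1 i :=
    Finset.measurable_sum _ fun i _ => (measurable_pi_apply i).const_mul _
  have hmeas2' : Measurable fun t : Vec d => ∑ i, w2 i * t i :=
    Finset.measurable_sum _ fun i _ => (measurable_pi_apply i).const_mul _
  have hmeas2 : Measurable fun q : Vec d × Vec d => ∑ i, w2 i * q.1 i :=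
    hmeas2'.comp measurable_fst
  have hpred : Measurable fun x : Inp d => pred w x := by
    have : (fun x : Inp d => pred w x)
        = fun x => (∑ i, w1 i * x.1 i) + ∑ i, w2 i * x.2.1 i := by
      funext x
      simp [pred, dot, hw_def]
    rw [this]
    exact (hmeas1.comp measurable_fst).add (hmeas2'.comp (measurable_fst.comp measurable_snd))
  -- the law of pred w under condX2
  have hlaw : ∀ y : ℝ, (condX2 d μ σ γ η y).map (fun x => pred w x)
      = gaussianReal ((∑ i, w1 i * (μ i * y)) + ∑ i, w2 i * (-μ i * y)) V := by
    intro y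
    unfold condX2 gaussVec
    have hpredeq : (fun x : Inp d => pred w x)
        = fun x : Inp d => (fun x1 : Vec d => ∑ i, w1 i * x1 i) x.1
            + (fun q : Vec d × Vec d => ∑ i, w2 i * q.1 i) x.2 := by
      funext x
      simp [pred, dot, hw_def]
    rw [hpredeq]
    haveI : IsProbabilityMeasure
        (Measure.pi fun i : Fin d => gaussianReal (-μ i) (Real.toNNReal (η^2))) := by
      infer_instance
    refine map_add_of_gauss _ _ hmeas1 hmeas2 ?_ ?_
    · exact map_sum_pi d w1 (fun i => μ i * y) (Real.toNNReal (σ^2))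
    · have hg : (fun q : Vec d × Vec d => ∑ i, w2 i * q.1 i)
          = (fun t : Vec d => ∑ i, w2 i * t i) ∘ Prod.fst := rfl
      rw [hg, ← Measure.map_map hmeas2' measurable_fst, Measure.map_fst_prod]
      simp only [measure_univ, one_smul]
      exact map_sum_pi d w2 (fun i => -μ i * y) (Real.toNNReal (σ^2/γ))
  -- V is nonzero
  have hσ2 : Real.toNNReal (σ^2) ≠ 0 := by
    rw [ne_eq, Real.toNNReal_eq_zero, not_le]; positivity
  have hσ2γ : Real.toNNReal (σ^2/γ) ≠ 0 := by
    rw [ne_eq, Real.toNNReal_eq_zero, not_le]; positivity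
  have hV0 : V ≠ 0 := by
    intro h
    rw [hV_def] at h
    have hz := add_eq_zero.mp h
    rcases not_and_or.mp hw with h1 | h2
    · obtain ⟨i, hi⟩ := Function.ne_iff.mp h1
      have hipos : (0:ℝ) < w1 i ^ 2 :=
        lt_of_le_of_ne (sq_nonneg _) (Ne.symm (pow_ne_zero 2 hi))
      have hS1pos : 0 < S1 :=
        Finset.sum_pos' (fun j _ => sq_nonneg _) ⟨i, Finset.mem_univ i, hipos⟩
      rcases mul_eq_zero.mp hz.1 with hc | hc
      · rw [Real.toNNReal_eq_zero] at hc; linarith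
      · exact hσ2 hc
    · obtain ⟨i, hi⟩ := Function.ne_iff.mp h2
      have hipos : (0:ℝ) < w2 i ^ 2 :=
        lt_of_le_of_ne (sq_nonneg _) (Ne.symm (pow_ne_zero 2 hi))
      have hS2pos : 0 < S2 :=
        Finset.sum_pos' (fun j _ => sq_nonneg _) ⟨i, Finset.mem_univ i, hipos⟩
      rcases mul_eq_zero.mp hz.2 with hc | hc
      · rw [Real.toNNReal_eq_zero] at hc; linarith
      · exact hσ2γ hc
  -- compute the accuracy
  have hS : MeasurableSet {p : Inp d × ℝ | Real.sign (pred w p.1) = p.2} :=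
    measurableSet_eq_fun (measurable_real_sign.comp (hpred.comp measurable_fst)) measurable_snd
  haveI hPM1 : IsProbabilityMeasure (condX2 d μ σ γ η 1) := by
    unfold condX2 gaussVec; infer_instance
  haveI hPM2 : IsProbabilityMeasure (condX2 d μ σ γ η (-1)) := by
    unfold condX2 gaussVec; infer_instance
  unfold AccP Pc2 jointOf
  rw [Measure.add_apply, Measure.smul_apply, Measure.smul_apply, smul_eq_mul, smul_eq_mul,
    Measure.prod_dirac, Measure.prod_dirac,
    Measure.map_apply measurable_prodMk_right hS,
    Measure.map_apply measurable_prodMk_right hS]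
  have hset1 : ((fun x : Inp d => (x, (1:ℝ))) ⁻¹'
        {p : Inp d × ℝ | Real.sign (pred w p.1) = p.2})
      = (fun x => pred w x) ⁻¹' Set.Ioi 0 := by
    ext x
    simp [Set.mem_preimage, real_sign_eq_one_iff]
  have hset2 : ((fun x : Inp d => (x, (-1:ℝ))) ⁻¹'
        {p : Inp d × ℝ | Real.sign (pred w p.1) = p.2})
      = (fun x => pred w x) ⁻¹' Set.Iio 0 := by
    ext x
    simp [Set.mem_preimage, real_sign_eq_neg_one_iff]
  rw [hset1, hset2, ← Measure.map_apply hpred measurableSet_Ioi,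
    ← Measure.map_apply hpred measurableSet_Iio, hlaw 1, hlaw (-1)]
  have hA1 : (∑ i, w1 i * (μ i * 1)) + ∑ i, w2 i * (-μ i * 1) = M := by
    rw [hM_def]
    unfold dot
    rw [← Finset.sum_add_distrib]
    exact Finset.sum_congr rfl fun i _ => by rw [Pi.sub_apply]; ring
  have hA2 : (∑ i, w1 i * (μ i * -1)) + ∑ i, w2 i * (-μ i * -1) = -M := by
    rw [hM_def]
    unfold dot
    rw [← Finset.sum_neg_distrib, ← Finset.sum_add_distrib]
    exact Finset.sum_congr rfl fun i _ => by rw [Pi.sub_apply]; ring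
  rw [hA1, hA2, gaussianReal_neg_Iio M V]
  have hcombine : (2:ℝ≥0∞)⁻¹ * (gaussianReal M V) (Set.Ioi 0)
        + (2:ℝ≥0∞)⁻¹ * (gaussianReal M V) (Set.Ioi 0)
      = (gaussianReal M V) (Set.Ioi 0) := by
    rw [← add_mul, ENNReal.inv_two_add_inv_two, one_mul]
  rw [hcombine, gaussianReal_Ioi_toReal M V hV0]
  have hVreal : ((V : ℝ≥0) : ℝ) = σ^2 * (S1 + (1/γ) * S2) := by
    rw [hV_def]
    push_cast [Real.coe_toNNReal _ hS1nonneg, Real.coe_toNNReal _ hS2nonneg,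
      Real.coe_toNNReal _ (le_of_lt (by positivity : (0:ℝ) < σ^2)),
      Real.coe_toNNReal _ (le_of_lt (by positivity : (0:ℝ) < σ^2/γ))]
    field_simp
  congr 1
  rw [hVreal, show (2:ℝ) * (σ^2 * (S1 + (1/γ)*S2)) = σ^2 * (2 * (S1 + (1/γ)*S2)) by ring,
    Real.sqrt_mul (sq_nonneg σ), Real.sqrt_sq hσ.le,
    show vnorm w1 ^ 2 = S1 from Real.sq_sqrt hS1nonneg,
    show vnorm w2 ^ 2 = S2 from Real.sq_sqrt hS2nonneg]
end

section
/- Let w* = (1/(‖μ‖₂·√(1+γ²)))·[μ, −γμ, 0_d] ∈ ℝ^{3d}. Then w* has the least 0-1 classification error on the context-c2 distribution among all norm-bounded linear predictors: for every w ∈ W1, Acc_{P_{c2}}(w) ≤ Acc_{P_{c2}}(w*). -/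
open MeasureTheory ProbabilityTheory Real Filter
open scoped ENNReal NNReal

private lemma conv_pdf (m1 m2 : ℝ) (v1 v2 : ℝ≥0) (h1 : v1 ≠ 0) (h2 : v2 ≠ 0) (z x : ℝ) :
    gaussianPDFReal m1 v1 x * gaussianPDFReal m2 v2 (z - x)
      = gaussianPDFReal (m1 + m2) (v1 + v2) z *
        gaussianPDFReal ((v2 * m1 + v1 * (z - m2)) / (v1 + v2)) (v1 * v2 / (v1 + v2)) x := by
  have hv1 : (0:ℝ) < v1 := lt_of_le_of_ne (v1.coe_nonneg) (by exact_mod_cast (Ne.symm h1))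
  have hv2 : (0:ℝ) < v2 := lt_of_le_of_ne (v2.coe_nonneg) (by exact_mod_cast (Ne.symm h2))
  have hs : (0:ℝ) < (v1:ℝ) + v2 := by linarith
  have hpi : (0:ℝ) < π := Real.pi_pos
  simp only [gaussianPDFReal]

  rw [mul_mul_mul_comm, mul_mul_mul_comm _ (rexp _), ← Real.exp_add, ← Real.exp_add]
  congr 1
  · rw [← mul_inv, ← mul_inv, ← Real.sqrt_mul (by positivity), ← Real.sqrt_mul (by positivity)]
    congr 2
    push_cast
    field_simp
  · rw [Real.exp_eq_exp]
    push_cast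
    field_simp
    ring

lemma gauss_conv (m1 m2 : ℝ) (v1 v2 : ℝ≥0) :
    ((gaussianReal m1 v1).prod (gaussianReal m2 v2)).map (fun p => p.1 + p.2)
      = gaussianReal (m1 + m2) (v1 + v2) := by
  by_cases h1 : v1 = 0
  · subst h1
    rw [gaussianReal_zero_var, Measure.dirac_prod,
      Measure.map_map (g := fun p : ℝ × ℝ => p.1 + p.2) (measurable_fst.add measurable_snd) (measurable_prodMk_left)]
    have : ((fun p : ℝ × ℝ => p.1 + p.2) ∘ Prod.mk m1) = (fun y => m1 + y) := rfl
    rw [this, gaussianReal_map_const_add, add_comm m2 m1, zero_add]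
  by_cases h2 : v2 = 0
  · subst h2
    rw [gaussianReal_zero_var, Measure.prod_dirac,
      Measure.map_map (g := fun p : ℝ × ℝ => p.1 + p.2) (measurable_fst.add measurable_snd) (measurable_prodMk_right)]
    have : ((fun p : ℝ × ℝ => p.1 + p.2) ∘ (fun x => (x, m2))) = (fun x => x + m2) := rfl
    rw [this, gaussianReal_map_add_const, add_zero]
  have hsum : v1 + v2 ≠ 0 := by positivity
  ext s hs
  rw [Measure.map_apply (f := fun p : ℝ × ℝ => p.1 + p.2) (measurable_fst.add measurable_snd) hs,
    gaussianReal_of_var_ne_zero _ hsum, withDensity_apply _ hs,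
    Measure.prod_apply (hs.preimage (f := fun p : ℝ × ℝ => p.1 + p.2) (measurable_fst.add measurable_snd))]
  have step1 : ∀ x : ℝ, gaussianReal m2 v2 (Prod.mk x ⁻¹' ((fun p : ℝ × ℝ => p.1 + p.2) ⁻¹' s))
      = ∫⁻ z in s, ENNReal.ofReal (gaussianPDFReal m2 v2 (z - x)) := by
    intro x
    have hset : (Prod.mk x ⁻¹' ((fun p : ℝ × ℝ => p.1 + p.2) ⁻¹' s)) = (fun y => x + y) ⁻¹' s := rfl
    rw [hset, ← Measure.map_apply (measurable_const_add x) hs, gaussianReal_map_const_add,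
      gaussianReal_of_var_ne_zero _ h2, withDensity_apply _ hs]
    refine setLIntegral_congr_fun hs (fun z _ => ?_)
    unfold gaussianPDF gaussianPDFReal
    congr 3
    ring
  simp_rw [step1]
  have hq : v1 * v2 / (v1 + v2) ≠ 0 := by positivity
  have hF : Measurable (fun q : ℝ × ℝ => ENNReal.ofReal (gaussianPDFReal m2 v2 (q.2 - q.1))) :=
    ((measurable_gaussianPDFReal m2 v2).comp (measurable_snd.sub measurable_fst)).ennreal_ofReal
  have hmeas : Measurable fun x => ∫⁻ z in s, ENNReal.ofReal (gaussianPDFReal m2 v2 (z - x)) :=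
    Measurable.lintegral_prod_right' (f := fun q : ℝ × ℝ =>
      ENNReal.ofReal (gaussianPDFReal m2 v2 (q.2 - q.1))) hF
  rw [gaussianReal_of_var_ne_zero _ h1,
    lintegral_withDensity_eq_lintegral_mul _ (measurable_gaussianPDF _ _) hmeas]
  simp only [Pi.mul_apply]
  have hmul : ∀ x : ℝ, gaussianPDF m1 v1 x * ∫⁻ z in s, ENNReal.ofReal (gaussianPDFReal m2 v2 (z - x))
      = ∫⁻ z in s, ENNReal.ofReal (gaussianPDFReal m1 v1 x * gaussianPDFReal m2 v2 (z - x)) := by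
    intro x
    have hg : Measurable fun z : ℝ => ENNReal.ofReal (gaussianPDFReal m2 v2 (z - x)) :=
      ((measurable_gaussianPDFReal m2 v2).comp (measurable_sub_const x)).ennreal_ofReal
    rw [← lintegral_const_mul _ hg]
    refine lintegral_congr fun z => ?_
    rw [gaussianPDF, ENNReal.ofReal_mul (gaussianPDFReal_nonneg _ _ _)]
  simp_rw [hmul, conv_pdf m1 m2 v1 v2 h1 h2,
    ENNReal.ofReal_mul (gaussianPDFReal_nonneg _ _ _)]
  rw [lintegral_lintegral_swap]
  · refine setLIntegral_congr_fun hs (fun z _ => ?_)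
    rw [lintegral_const_mul _ (measurable_gaussianPDFReal _ _).ennreal_ofReal,
      lintegral_gaussianPDFReal_eq_one _ hq, mul_one, gaussianPDF]
  · have hc : Measurable fun p : ℝ × ℝ => gaussianPDFReal
        (((v2:ℝ) * m1 + (v1:ℝ) * (p.2 - m2)) / ((v1:ℝ) + (v2:ℝ))) (v1 * v2 / (v1 + v2)) p.1 := by
      simp only [gaussianPDFReal]
      fun_prop
    exact (Measurable.mul (((measurable_gaussianPDFReal _ _).comp
      measurable_snd).ennreal_ofReal) hc.ennreal_ofReal).aemeasurable

lemma gauss_pi_sum (n : ℕ) (c m : Fin n → ℝ) (v : Fin n → ℝ≥0) :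
    (Measure.pi fun i => gaussianReal (m i) (v i)).map (fun x => ∑ i, c i * x i)
      = gaussianReal (∑ i, c i * m i) (∑ i, Real.toNNReal (c i ^ 2) * v i) := by
  induction n with
  | zero =>
      simp only [Finset.univ_eq_empty, Finset.sum_empty]
      rw [show (fun x : Fin 0 → ℝ => (0:ℝ)) = (fun _ => 0) from rfl]
      rw [Measure.map_const, measure_univ, one_smul, gaussianReal_zero_var]
  | succ n ih =>
      set e := MeasurableEquiv.piFinSuccAbove (fun _ : Fin (n+1) => ℝ) 0 with he
      have hmp := measurePreserving_piFinSuccAbove (fun i => gaussianReal (m i) (v i)) 0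
      have hcomp : (fun x : Fin (n+1) → ℝ => ∑ i, c i * x i)
          = (fun p : ℝ × (Fin n → ℝ) => c 0 * p.1 + ∑ j, c j.succ * p.2 j) ∘ e := by
        funext x
        simp only [Function.comp_apply, he, MeasurableEquiv.piFinSuccAbove_apply,
          Fin.insertNthEquiv, Equiv.coe_fn_symm_mk]
        rw [Fin.sum_univ_succ]
        congr 1
      rw [hcomp, ← Measure.map_map (by fun_prop) e.measurable, hmp.map_eq]
      have hdecomp : (fun p : ℝ × (Fin n → ℝ) => c 0 * p.1 + ∑ j, c j.succ * p.2 j)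
          = (fun q : ℝ × ℝ => q.1 + q.2) ∘
            (Prod.map (fun t => c 0 * t) (fun y : Fin n → ℝ => ∑ j, c j.succ * y j)) := rfl
      rw [hdecomp, ← Measure.map_map (g := fun q : ℝ × ℝ => q.1 + q.2) (measurable_fst.add measurable_snd)
        ((measurable_const_mul _).prodMap (by fun_prop)),
        ← Measure.map_prod_map _ _ (measurable_const_mul _) (by fun_prop)]
      simp only [Fin.succAbove_zero]
      rw [ih (fun j => c j.succ) (fun j => m j.succ) (fun j => v j.succ),
        gaussianReal_map_const_mul, gauss_conv, Fin.sum_univ_succ, Fin.sum_univ_succ]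
      congr 2
      ext : 1
      simp [Real.toNNReal, max_eq_left (sq_nonneg (c 0))]

lemma map_add3 {α β γ : Type*} [MeasurableSpace α] [MeasurableSpace β] [MeasurableSpace γ]
    (μ1 : Measure α) (μ2 : Measure β) (μ3 : Measure γ)
    [SFinite μ1] [SFinite μ2] [SFinite μ3]
    {f1 : α → ℝ} {f2 : β → ℝ} {f3 : γ → ℝ}
    (hf1 : Measurable f1) (hf2 : Measurable f2) (hf3 : Measurable f3)
    {a1 a2 a3 : ℝ} {u1 u2 u3 : ℝ≥0}
    (h1 : μ1.map f1 = gaussianReal a1 u1) (h2 : μ2.map f2 = gaussianReal a2 u2)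
    (h3 : μ3.map f3 = gaussianReal a3 u3) :
    (μ1.prod (μ2.prod μ3)).map (fun p => f1 p.1 + f2 p.2.1 + f3 p.2.2)
      = gaussianReal (a1 + a2 + a3) (u1 + u2 + u3) := by
  have hinner : (μ2.prod μ3).map (fun q => f2 q.1 + f3 q.2)
      = gaussianReal (a2 + a3) (u2 + u3) := by
    have : (fun q : β × γ => f2 q.1 + f3 q.2)
        = (fun p : ℝ × ℝ => p.1 + p.2) ∘ Prod.map f2 f3 := rfl
    rw [this, ← Measure.map_map (g := fun p : ℝ × ℝ => p.1 + p.2) (measurable_fst.add measurable_snd) (hf2.prodMap hf3),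
      ← Measure.map_prod_map _ _ hf2 hf3, h2, h3, gauss_conv]
  have houter : (fun p : α × (β × γ) => f1 p.1 + f2 p.2.1 + f3 p.2.2)
      = (fun p : ℝ × ℝ => p.1 + p.2) ∘ Prod.map f1 (fun q : β × γ => f2 q.1 + f3 q.2) := by
    funext p; simp [Prod.map, add_assoc]
  have hg : Measurable fun q : β × γ => f2 q.1 + f3 q.2 :=
    (hf2.comp measurable_fst).add (hf3.comp measurable_snd)
  rw [houter, ← Measure.map_map (g := fun p : ℝ × ℝ => p.1 + p.2) (measurable_fst.add measurable_snd) (hf1.prodMap hg),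
    ← Measure.map_prod_map _ _ hf1 hg, h1, hinner, gauss_conv, add_assoc, add_assoc]

noncomputable def Phi (t : ℝ) : ℝ := (gaussianReal 0 1 (Set.Ioi (-t))).toReal

lemma Phi_nonneg (t : ℝ) : 0 ≤ Phi t := ENNReal.toReal_nonneg

lemma Phi_mono {s t : ℝ} (h : s ≤ t) : Phi s ≤ Phi t := by
  refine ENNReal.toReal_mono (measure_ne_top _ _) (measure_mono ?_)
  exact Set.Ioi_subset_Ioi (neg_le_neg h)

lemma gauss_symm : (gaussianReal 0 1).map (fun x => -x) = gaussianReal 0 1 := by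
  have := gaussianReal_map_const_mul (μ := 0) (v := 1) (-1)
  simp only [neg_one_mul, neg_zero] at this
  convert this using 2
  ext
  norm_num

lemma gauss_Iio (a : ℝ) : gaussianReal 0 1 (Set.Iio a) = gaussianReal 0 1 (Set.Ioi (-a)) := by
  conv_lhs => rw [← gauss_symm]
  rw [Measure.map_apply measurable_neg measurableSet_Iio]
  congr 1
  ext x
  simp [neg_lt]

lemma gauss_singleton (a : ℝ) : gaussianReal 0 1 {a} = 0 :=
  (gaussianReal_absolutelyContinuous 0 one_ne_zero) (by simp)

lemma gauss_Iic (a : ℝ) : gaussianReal 0 1 (Set.Iic a) = gaussianReal 0 1 (Set.Iio a) := by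
  rw [← Set.Iio_union_right, measure_union (by simp) (measurableSet_singleton a),
    gauss_singleton, add_zero]

lemma Phi_add_Phi_neg (t : ℝ) : Phi t + Phi (-t) = 1 := by
  unfold Phi
  rw [← ENNReal.toReal_add (measure_ne_top _ _) (measure_ne_top _ _)]
  have h1 : gaussianReal 0 1 (Set.Ioi (- -t)) = gaussianReal 0 1 (Set.Iic (-t)) := by
    rw [gauss_Iic, gauss_Iio, neg_neg]
  rw [h1, add_comm, ← measure_union (Set.Iic_disjoint_Ioi le_rfl) measurableSet_Ioi,
    Set.Iic_union_Ioi, measure_univ, ENNReal.toReal_one]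

lemma gauss_std (m : ℝ) {v : ℝ≥0} (hv : v ≠ 0) :
    gaussianReal m v = ((gaussianReal 0 1).map (fun x => Real.sqrt v * x)).map (fun x => x + m) := by
  rw [gaussianReal_map_const_mul, gaussianReal_map_add_const]
  congr 1
  · ring
  · ext
    push_cast
    rw [Real.sq_sqrt v.coe_nonneg]
    simp

lemma gauss_Ioi_toReal (m : ℝ) {v : ℝ≥0} (hv : v ≠ 0) :
    (gaussianReal m v (Set.Ioi 0)).toReal = Phi (m / Real.sqrt v) := by
  have hs : (0:ℝ) < Real.sqrt v := Real.sqrt_pos.2 (by exact_mod_cast pos_iff_ne_zero.2 hv)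
  rw [gauss_std m hv, Measure.map_apply (measurable_add_const m) measurableSet_Ioi,
    Measure.map_apply (measurable_const_mul _) (by measurability)]
  have : ((fun x => Real.sqrt v * x) ⁻¹' ((fun x => x + m) ⁻¹' Set.Ioi 0))
      = Set.Ioi (-(m / Real.sqrt v)) := by
    ext x
    simp only [Set.mem_preimage, Set.mem_Ioi]
    rw [show -(m / Real.sqrt v) = (-m) / Real.sqrt v by ring, div_lt_iff₀ hs]
    constructor <;> intro h <;> linarith
  rw [this]
  rfl

lemma gauss_Iio_toReal (m : ℝ) {v : ℝ≥0} (hv : v ≠ 0) :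
    (gaussianReal m v (Set.Iio 0)).toReal = Phi (-(m / Real.sqrt v)) := by
  have hs : (0:ℝ) < Real.sqrt v := Real.sqrt_pos.2 (by exact_mod_cast pos_iff_ne_zero.2 hv)
  rw [gauss_std m hv, Measure.map_apply (measurable_add_const m) measurableSet_Iio,
    Measure.map_apply (measurable_const_mul _) (by measurability)]
  have : ((fun x => Real.sqrt v * x) ⁻¹' ((fun x => x + m) ⁻¹' Set.Iio 0))
      = Set.Iio (-(m / Real.sqrt v)) := by
    ext x
    simp only [Set.mem_preimage, Set.mem_Iio]
    rw [show -(m / Real.sqrt v) = (-m) / Real.sqrt v by ring, lt_div_iff₀ hs]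
    constructor <;> intro h <;> linarith
  rw [this, gauss_Iio]
  rfl

lemma Phi_diff {a b : ℝ} (hab : a ≤ b) :
    Phi b - Phi a = ∫ x in (-b)..(-a), gaussianPDFReal 0 1 x := by
  have hsplit : Set.Ioi (-b) = Set.Ioc (-b) (-a) ∪ Set.Ioi (-a) :=
    (Set.Ioc_union_Ioi_eq_Ioi (neg_le_neg hab)).symm
  have hdisj : Disjoint (Set.Ioc (-b) (-a)) (Set.Ioi (-a)) := Set.Ioc_disjoint_Ioi le_rfl
  unfold Phi
  rw [hsplit, measure_union hdisj measurableSet_Ioi,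
    ENNReal.toReal_add (measure_ne_top _ _) (measure_ne_top _ _)]
  have : (gaussianReal 0 1 (Set.Ioc (-b) (-a))).toReal
      = ∫ x in (-b)..(-a), gaussianPDFReal 0 1 x := by
    rw [gaussianReal_apply_eq_integral _ one_ne_zero, ENNReal.toReal_ofReal
      (setIntegral_nonneg measurableSet_Ioc fun x _ => gaussianPDFReal_nonneg _ _ _),
      intervalIntegral.integral_of_le (neg_le_neg hab)]
  rw [this]
  ring

lemma reflect_pdf (m x : ℝ) :
    gaussianPDFReal 0 1 (-(2*m) - x) = gaussianPDFReal (-(2*m)) 1 x := by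
  unfold gaussianPDFReal
  congr 1
  rw [Real.exp_eq_exp]
  ring

lemma Phi_concave {m t : ℝ} (hm : 0 ≤ m) (ht : 0 ≤ t) :
    Phi (m + t) + Phi (m - t) ≤ 2 * Phi m := by
  have key : Phi (m + t) - Phi m ≤ Phi m - Phi (m - t) := by
    rw [Phi_diff (show m ≤ m + t by linarith), Phi_diff (show m - t ≤ m by linarith)]
    have hrefl : (∫ x in (-(m+t))..(-m), gaussianPDFReal 0 1 x)
        = ∫ x in (-m)..(-(m-t)), gaussianPDFReal (-(2*m)) 1 x := by
      have := intervalIntegral.integral_comp_sub_left (a := -m) (b := -(m-t))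
        (gaussianPDFReal 0 1) (-(2*m))
      simp_rw [reflect_pdf] at this
      rw [this]
      congr 1 <;> ring
    rw [hrefl]
    refine intervalIntegral.integral_mono_on (by linarith)
      ((integrable_gaussianPDFReal _ _).intervalIntegrable)
      ((integrable_gaussianPDFReal _ _).intervalIntegrable) (fun x hx => ?_)
    obtain ⟨hx1, hx2⟩ := hx
    unfold gaussianPDFReal
    refine mul_le_mul_of_nonneg_left (Real.exp_le_exp.2 ?_) (by positivity)
    have h1 : ((1:ℝ≥0):ℝ) = 1 := rfl
    rw [h1]
    have : x ^ 2 ≤ (x - -(2*m)) ^ 2 := by nlinarith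
    nlinarith
  linarith


lemma Phi_ge_one {u v : ℝ} (h : 0 ≤ u + v) : 1 ≤ Phi u + Phi v := by
  have h1 := Phi_add_Phi_neg v
  have h2 := Phi_mono (show -v ≤ u by linarith)
  linarith

lemma Phi_key {p q M : ℝ} (hM : 0 ≤ M) (h : p + q ≤ 2 * M) : Phi p + Phi q ≤ 2 * Phi M := by
  rcases le_or_gt 0 (p + q) with hm | hm
  · have hmM : (p + q) / 2 ≤ M := by linarith
    have hm2 : 0 ≤ (p + q) / 2 := by linarith
    have hPhiM := Phi_mono hmM
    rcases le_total q p with hqp | hqp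
    · have := Phi_concave hm2 (show 0 ≤ (p - q)/2 by linarith)
      have e1 : (p+q)/2 + (p-q)/2 = p := by ring
      have e2 : (p+q)/2 - (p-q)/2 = q := by ring
      rw [e1, e2] at this
      linarith
    · have := Phi_concave hm2 (show 0 ≤ (q - p)/2 by linarith)
      have e1 : (p+q)/2 + (q-p)/2 = q := by ring
      have e2 : (p+q)/2 - (q-p)/2 = p := by ring
      rw [e1, e2] at this
      linarith
  · have h1 := Phi_add_Phi_neg p
    have h2 := Phi_add_Phi_neg q
    have h3 : 1 ≤ Phi (-p) + Phi (-q) := Phi_ge_one (by linarith)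
    have h4 : Phi 0 ≤ Phi M := Phi_mono hM
    have h5 := Phi_add_Phi_neg 0
    rw [neg_zero] at h5
    linarith
lemma measurable_dot {d : ℕ} (c : Vec d) : Measurable (dot c) := by
  unfold dot; fun_prop

lemma measurable_pred' {d : ℕ} (w : Inp d) : Measurable (pred w) := by
  unfold pred dot; fun_prop

lemma sign_eq_one_iff' (x : ℝ) : Real.sign x = 1 ↔ 0 < x := by
  constructor
  · intro h
    rcases lt_trichotomy x 0 with h' | h' | h'
    · rw [Real.sign_of_neg h'] at h; norm_num at h
    · rw [h', Real.sign_zero] at h; norm_num at h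
    · exact h'
  · exact Real.sign_of_pos

lemma sign_eq_neg_one_iff' (x : ℝ) : Real.sign x = -1 ↔ x < 0 := by
  constructor
  · intro h
    rcases lt_trichotomy x 0 with h' | h' | h'
    · exact h'
    · rw [h', Real.sign_zero] at h; norm_num at h
    · rw [Real.sign_of_pos h'] at h; norm_num at h
  · exact Real.sign_of_neg

/-- Total variance of `wᵀx` under the context-c2 conditional law. -/
noncomputable def Vof (d : ℕ) (σ γ η : ℝ) (u : Inp d) : ℝ :=
  σ ^ 2 * (∑ i, u.1 i ^ 2) + (σ ^ 2 / γ) * (∑ i, u.2.1 i ^ 2) + η ^ 2 * (∑ i, u.2.2 i ^ 2)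

/-- Mean of `wᵀx` under the context-c2 conditional law given label `y`. -/
noncomputable def meanY (d : ℕ) (μ : Vec d) (u : Inp d) (y : ℝ) : ℝ :=
  y * (∑ i, u.1 i * μ i) - y * (∑ i, u.2.1 i * μ i) - ∑ i, u.2.2 i * μ i

lemma Vof_nonneg {d : ℕ} {σ γ η : ℝ} (hσ : 0 < σ) (hγ : 0 < γ) (hη : 0 < η) (u : Inp d) :
    0 ≤ Vof d σ γ η u := by
  unfold Vof
  have h1 : (0:ℝ) ≤ ∑ i, u.1 i ^ 2 := Finset.sum_nonneg fun i _ => sq_nonneg _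
  have h2 : (0:ℝ) ≤ ∑ i, u.2.1 i ^ 2 := Finset.sum_nonneg fun i _ => sq_nonneg _
  have h3 : (0:ℝ) ≤ ∑ i, u.2.2 i ^ 2 := Finset.sum_nonneg fun i _ => sq_nonneg _
  positivity

lemma isProb_condX2 {d : ℕ} (μ : Vec d) (σ γ η y : ℝ) :
    IsProbabilityMeasure (condX2 d μ σ γ η y) := by
  unfold condX2 gaussVec; infer_instance

lemma law_pred {d : ℕ} (μ : Vec d) {σ γ η : ℝ} (hσ : 0 < σ) (hγ : 0 < γ) (hη : 0 < η)
    (u : Inp d) (y : ℝ) :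
    (condX2 d μ σ γ η y).map (pred u)
      = gaussianReal (meanY d μ u y) (Real.toNNReal (Vof d σ γ η u)) := by
  have h1 : (gaussVec d (fun i => μ i * y) (σ ^ 2)).map (dot u.1)
      = gaussianReal (∑ i, u.1 i * (μ i * y))
          (∑ i, Real.toNNReal (u.1 i ^ 2) * Real.toNNReal (σ ^ 2)) :=
    gauss_pi_sum d u.1 _ _
  have h2 : (gaussVec d (fun i => -μ i * y) (σ ^ 2 / γ)).map (dot u.2.1)
      = gaussianReal (∑ i, u.2.1 i * (-μ i * y))
          (∑ i, Real.toNNReal (u.2.1 i ^ 2) * Real.toNNReal (σ ^ 2 / γ)) :=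
    gauss_pi_sum d u.2.1 _ _
  have h3 : (gaussVec d (fun i => -μ i) (η ^ 2)).map (dot u.2.2)
      = gaussianReal (∑ i, u.2.2 i * (-μ i))
          (∑ i, Real.toNNReal (u.2.2 i ^ 2) * Real.toNNReal (η ^ 2)) :=
    gauss_pi_sum d u.2.2 _ _
  haveI : IsProbabilityMeasure (gaussVec d (fun i => μ i * y) (σ ^ 2)) := by
    unfold gaussVec; infer_instance
  haveI : IsProbabilityMeasure (gaussVec d (fun i => -μ i * y) (σ ^ 2 / γ)) := by
    unfold gaussVec; infer_instance
  haveI : IsProbabilityMeasure (gaussVec d (fun i => -μ i) (η ^ 2)) := by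
    unfold gaussVec; infer_instance
  have key := map_add3 _ _ _ (measurable_dot u.1) (measurable_dot u.2.1) (measurable_dot u.2.2)
    h1 h2 h3
  unfold condX2
  have hfun : (pred u : Inp d → ℝ)
      = fun p : Vec d × Vec d × Vec d => dot u.1 p.1 + dot u.2.1 p.2.1 + dot u.2.2 p.2.2 := rfl
  rw [hfun, key]
  congr 1
  · unfold meanY
    have e1 : ∑ i, u.1 i * (μ i * y) = y * ∑ i, u.1 i * μ i := by
      rw [Finset.mul_sum]; exact Finset.sum_congr rfl fun i _ => by ring
    have e2 : ∑ i, u.2.1 i * (-μ i * y) = -(y * ∑ i, u.2.1 i * μ i) := by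
      rw [Finset.mul_sum, ← Finset.sum_neg_distrib]
      exact Finset.sum_congr rfl fun i _ => by ring
    have e3 : ∑ i, u.2.2 i * (-μ i) = -∑ i, u.2.2 i * μ i := by
      rw [← Finset.sum_neg_distrib]
      exact Finset.sum_congr rfl fun i _ => by ring
    rw [e1, e2, e3]; ring
  · refine NNReal.coe_injective ?_
    rw [Real.coe_toNNReal _ (Vof_nonneg hσ hγ hη u)]
    push_cast [NNReal.coe_sum]
    have c1 : ∀ i : Fin d, ((Real.toNNReal (u.1 i ^ 2) : ℝ≥0) : ℝ) * ((Real.toNNReal (σ ^ 2) : ℝ≥0) : ℝ)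
        = u.1 i ^ 2 * σ ^ 2 := fun i => by
      rw [Real.coe_toNNReal _ (sq_nonneg _), Real.coe_toNNReal _ (sq_nonneg _)]
    have c2 : ∀ i : Fin d, ((Real.toNNReal (u.2.1 i ^ 2) : ℝ≥0) : ℝ) * ((Real.toNNReal (σ ^ 2 / γ) : ℝ≥0) : ℝ)
        = u.2.1 i ^ 2 * (σ ^ 2 / γ) := fun i => by
      rw [Real.coe_toNNReal _ (sq_nonneg _),
        Real.coe_toNNReal _ (by positivity : (0:ℝ) ≤ σ ^ 2 / γ)]
    have c3 : ∀ i : Fin d, ((Real.toNNReal (u.2.2 i ^ 2) : ℝ≥0) : ℝ) * ((Real.toNNReal (η ^ 2) : ℝ≥0) : ℝ)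
        = u.2.2 i ^ 2 * η ^ 2 := fun i => by
      rw [Real.coe_toNNReal _ (sq_nonneg _), Real.coe_toNNReal _ (sq_nonneg _)]
    rw [Finset.sum_congr rfl fun i _ => c1 i, Finset.sum_congr rfl fun i _ => c2 i,
      Finset.sum_congr rfl fun i _ => c3 i]
    unfold Vof
    rw [Finset.mul_sum, Finset.mul_sum, Finset.mul_sum]
    congr 1
    · congr 1 <;> exact Finset.sum_congr rfl fun i _ => by ring
    · exact Finset.sum_congr rfl fun i _ => by ring

lemma AccP_pos {d : ℕ} (μ : Vec d) {σ γ η : ℝ} (hσ : 0 < σ) (hγ : 0 < γ) (hη : 0 < η)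
    (u : Inp d) (hV : 0 < Vof d σ γ η u) :
    AccP (Pc2 d μ σ γ η) u
      = 2⁻¹ * Phi (meanY d μ u 1 / Real.sqrt (Vof d σ γ η u))
        + 2⁻¹ * Phi (-(meanY d μ u (-1)) / Real.sqrt (Vof d σ γ η u)) := by
  haveI hP1 : IsProbabilityMeasure (condX2 d μ σ γ η 1) := isProb_condX2 μ σ γ η 1
  haveI hP2 : IsProbabilityMeasure (condX2 d μ σ γ η (-1)) := isProb_condX2 μ σ γ η (-1)
  have hVne : Real.toNNReal (Vof d σ γ η u) ≠ 0 := by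
    simp only [ne_eq, Real.toNNReal_eq_zero, not_le]
    exact hV
  unfold AccP Pc2 jointOf
  rw [Measure.add_apply, Measure.smul_apply, Measure.smul_apply,
    Measure.prod_dirac, Measure.prod_dirac,
    (measurableEmbedding_prod_mk_right (1:ℝ)).map_apply,
    (measurableEmbedding_prod_mk_right (-1:ℝ)).map_apply]
  have hs1 : ((fun x : Inp d => (x, (1:ℝ))) ⁻¹' {p : Inp d × ℝ | Real.sign (pred u p.1) = p.2})
      = pred u ⁻¹' (Set.Ioi 0) := by
    ext x
    simpa using sign_eq_one_iff' (pred u x)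
  have hs2 : ((fun x : Inp d => (x, (-1:ℝ))) ⁻¹' {p : Inp d × ℝ | Real.sign (pred u p.1) = p.2})
      = pred u ⁻¹' (Set.Iio 0) := by
    ext x
    simpa using sign_eq_neg_one_iff' (pred u x)
  rw [hs1, hs2, ← Measure.map_apply (measurable_pred' u) measurableSet_Ioi,
    ← Measure.map_apply (measurable_pred' u) measurableSet_Iio,
    law_pred μ hσ hγ hη u 1, law_pred μ hσ hγ hη u (-1)]
  rw [smul_eq_mul, smul_eq_mul,
    ENNReal.toReal_add (ENNReal.mul_ne_top (by norm_num) (measure_ne_top _ _))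
      (ENNReal.mul_ne_top (by norm_num) (measure_ne_top _ _)),
    ENNReal.toReal_mul, ENNReal.toReal_mul]
  have h2 : ((2:ℝ≥0∞)⁻¹).toReal = 2⁻¹ := by simp
  have hcoe : ((Real.toNNReal (Vof d σ γ η u) : ℝ≥0) : ℝ) = Vof d σ γ η u :=
    Real.coe_toNNReal _ hV.le
  rw [h2, gauss_Ioi_toReal _ hVne, gauss_Iio_toReal _ hVne, hcoe, neg_div]

lemma AccP_degenerate {d : ℕ} (μ : Vec d) {σ γ η : ℝ} (hσ : 0 < σ) (hγ : 0 < γ) (hη : 0 < η)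
    (u : Inp d) (hV : Vof d σ γ η u = 0) :
    AccP (Pc2 d μ σ γ η) u = 0 := by
  haveI hP1 : IsProbabilityMeasure (condX2 d μ σ γ η 1) := isProb_condX2 μ σ γ η 1
  haveI hP2 : IsProbabilityMeasure (condX2 d μ σ γ η (-1)) := isProb_condX2 μ σ γ η (-1)
  have hpred : ∀ x : Inp d, pred u x = 0 := by
    unfold Vof at hV
    have h1 : (0:ℝ) ≤ ∑ i, u.1 i ^ 2 := Finset.sum_nonneg fun i _ => sq_nonneg _
    have h2 : (0:ℝ) ≤ ∑ i, u.2.1 i ^ 2 := Finset.sum_nonneg fun i _ => sq_nonneg _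
    have h3 : (0:ℝ) ≤ ∑ i, u.2.2 i ^ 2 := Finset.sum_nonneg fun i _ => sq_nonneg _
    have hσ2 : (0:ℝ) < σ ^ 2 := by positivity
    have hσγ : (0:ℝ) < σ ^ 2 / γ := by positivity
    have hη2 : (0:ℝ) < η ^ 2 := by positivity
    have e1 : ∑ i, u.1 i ^ 2 = 0 := by nlinarith
    have e2 : ∑ i, u.2.1 i ^ 2 = 0 := by nlinarith
    have e3 : ∑ i, u.2.2 i ^ 2 = 0 := by nlinarith
    have z1 := (Finset.sum_eq_zero_iff_of_nonneg fun i _ => sq_nonneg (u.1 i)).1 e1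
    have z2 := (Finset.sum_eq_zero_iff_of_nonneg fun i _ => sq_nonneg (u.2.1 i)).1 e2
    have z3 := (Finset.sum_eq_zero_iff_of_nonneg fun i _ => sq_nonneg (u.2.2 i)).1 e3
    intro x
    unfold pred dot
    have t1 : ∀ i : Fin d, u.1 i * x.1 i = 0 := fun i => by
      have := z1 i (Finset.mem_univ i); rw [pow_eq_zero_iff (by norm_num)] at this
      rw [this, zero_mul]
    have t2 : ∀ i : Fin d, u.2.1 i * x.2.1 i = 0 := fun i => by
      have := z2 i (Finset.mem_univ i); rw [pow_eq_zero_iff (by norm_num)] at this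
      rw [this, zero_mul]
    have t3 : ∀ i : Fin d, u.2.2 i * x.2.2 i = 0 := fun i => by
      have := z3 i (Finset.mem_univ i); rw [pow_eq_zero_iff (by norm_num)] at this
      rw [this, zero_mul]
    rw [Finset.sum_congr rfl fun i _ => t1 i, Finset.sum_congr rfl fun i _ => t2 i,
      Finset.sum_congr rfl fun i _ => t3 i]
    simp
  unfold AccP Pc2 jointOf
  rw [Measure.add_apply, Measure.smul_apply, Measure.smul_apply,
    Measure.prod_dirac, Measure.prod_dirac,
    (measurableEmbedding_prod_mk_right (1:ℝ)).map_apply,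
    (measurableEmbedding_prod_mk_right (-1:ℝ)).map_apply]
  have hs1 : ((fun x : Inp d => (x, (1:ℝ))) ⁻¹' {p : Inp d × ℝ | Real.sign (pred u p.1) = p.2})
      = (∅ : Set (Inp d)) := by
    ext x
    simp [hpred x, Real.sign_zero]
  have hs2 : ((fun x : Inp d => (x, (-1:ℝ))) ⁻¹' {p : Inp d × ℝ | Real.sign (pred u p.1) = p.2})
      = (∅ : Set (Inp d)) := by
    ext x
    simp [hpred x, Real.sign_zero]
  rw [hs1, hs2]
  simp

lemma CS_bound {d : ℕ} (μ : Vec d) {σ γ η : ℝ} (hσ : 0 < σ) (hγ : 0 < γ) (hη : 0 < η)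
    (u : Inp d) :
    (∑ i, u.1 i * μ i) - (∑ i, u.2.1 i * μ i)
      ≤ (vnorm μ * Real.sqrt (1 + γ) / σ) * Real.sqrt (Vof d σ γ η u) := by
  set L := vnorm μ with hLdef
  have hL0 : 0 ≤ L := Real.sqrt_nonneg _
  have hL2 : L ^ 2 = ∑ i, μ i ^ 2 := Real.sq_sqrt (Finset.sum_nonneg fun i _ => sq_nonneg _)
  set S1 := ∑ i, u.1 i ^ 2 with hS1def
  set S2 := ∑ i, u.2.1 i ^ 2 with hS2def
  set S3 := ∑ i, u.2.2 i ^ 2 with hS3def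
  have hS1 : 0 ≤ S1 := Finset.sum_nonneg fun i _ => sq_nonneg _
  have hS2 : 0 ≤ S2 := Finset.sum_nonneg fun i _ => sq_nonneg _
  have hS3 : 0 ≤ S3 := Finset.sum_nonneg fun i _ => sq_nonneg _
  -- step 1: block Cauchy-Schwarz
  have hd1 : (∑ i, u.1 i * μ i) ≤ Real.sqrt S1 * L := by
    have h := Finset.sum_mul_sq_le_sq_mul_sq Finset.univ u.1 μ
    calc (∑ i, u.1 i * μ i) ≤ |∑ i, u.1 i * μ i| := le_abs_self _
      _ = Real.sqrt ((∑ i, u.1 i * μ i) ^ 2) := (Real.sqrt_sq_eq_abs _).symm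
      _ ≤ Real.sqrt (S1 * L ^ 2) := Real.sqrt_le_sqrt (by rw [hL2]; exact h)
      _ = Real.sqrt S1 * L := by
          rw [Real.sqrt_mul hS1, Real.sqrt_sq hL0]
  have hd2 : -(∑ i, u.2.1 i * μ i) ≤ Real.sqrt S2 * L := by
    have h := Finset.sum_mul_sq_le_sq_mul_sq Finset.univ (fun i => -u.2.1 i) μ
    have e1 : ∑ i, (fun i => -u.2.1 i) i * μ i = -∑ i, u.2.1 i * μ i := by
      rw [← Finset.sum_neg_distrib]; exact Finset.sum_congr rfl fun i _ => by ring
    have e2 : ∑ i, ((fun i => -u.2.1 i) i) ^ 2 = S2 := by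
      rw [hS2def]; exact Finset.sum_congr rfl fun i _ => by ring
    rw [e1, e2] at h
    calc -(∑ i, u.2.1 i * μ i) ≤ |(-∑ i, u.2.1 i * μ i)| := le_abs_self _
      _ = Real.sqrt ((-∑ i, u.2.1 i * μ i) ^ 2) := (Real.sqrt_sq_eq_abs _).symm
      _ ≤ Real.sqrt (S2 * L ^ 2) := Real.sqrt_le_sqrt (by rw [hL2]; exact h)
      _ = Real.sqrt S2 * L := by
          rw [Real.sqrt_mul hS2, Real.sqrt_sq hL0]
  -- step 2: weighted two-term Cauchy-Schwarz
  have hx : Real.sqrt S1 ^ 2 = S1 := Real.sq_sqrt hS1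
  have hy : Real.sqrt S2 ^ 2 = S2 := Real.sq_sqrt hS2
  have hsum : Real.sqrt S1 + Real.sqrt S2 ≤ Real.sqrt ((1 + γ) * (S1 + S2 / γ)) := by
    rw [Real.le_sqrt (by positivity) (by positivity)]
    have h2 : 2 * (Real.sqrt S1 * Real.sqrt S2) ≤ γ * S1 + S2 / γ := by
      have e : γ * S1 + S2 / γ - 2 * (Real.sqrt S1 * Real.sqrt S2)
          = (γ * Real.sqrt S1 - Real.sqrt S2) ^ 2 / γ := by
        field_simp
        linear_combination (-(γ ^ 2)) * hx - hy
      have := div_nonneg (sq_nonneg (γ * Real.sqrt S1 - Real.sqrt S2)) hγ.le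
      linarith
    have lhs_exp : (Real.sqrt S1 + Real.sqrt S2) ^ 2
        = S1 + 2 * (Real.sqrt S1 * Real.sqrt S2) + S2 := by
      rw [add_sq, hx, hy]; ring
    have rhs_exp : (1 + γ) * (S1 + S2 / γ) = S1 + S2 / γ + γ * S1 + S2 := by
      field_simp; ring
    rw [lhs_exp, rhs_exp]
    linarith
  -- step 3
  have step3 : σ * Real.sqrt (S1 + S2 / γ) ≤ Real.sqrt (Vof d σ γ η u) := by
    have e : σ * Real.sqrt (S1 + S2 / γ) = Real.sqrt (σ ^ 2 * (S1 + S2 / γ)) := by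
      rw [Real.sqrt_mul (sq_nonneg σ), Real.sqrt_sq hσ.le]
    rw [e]
    refine Real.sqrt_le_sqrt ?_
    unfold Vof
    rw [← hS1def, ← hS2def, ← hS3def]
    have : σ ^ 2 * (S2 / γ) = (σ ^ 2 / γ) * S2 := by ring
    nlinarith [mul_nonneg (sq_nonneg η) hS3]
  calc (∑ i, u.1 i * μ i) - (∑ i, u.2.1 i * μ i)
      ≤ (Real.sqrt S1 + Real.sqrt S2) * L := by nlinarith [hd1, hd2]
    _ ≤ Real.sqrt ((1 + γ) * (S1 + S2 / γ)) * L := mul_le_mul_of_nonneg_right hsum hL0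
    _ = (L * Real.sqrt (1 + γ) / σ) * (σ * Real.sqrt (S1 + S2 / γ)) := by
        rw [Real.sqrt_mul (by linarith : (0:ℝ) ≤ 1 + γ)]
        field_simp
    _ ≤ (L * Real.sqrt (1 + γ) / σ) * Real.sqrt (Vof d σ γ η u) :=
        mul_le_mul_of_nonneg_left step3 (by positivity)

set_option maxHeartbeats 1000000 in
theorem bayes_optimal_linear_predictor_c2 (d : ℕ) (hd : 1 ≤ d) (μ : Vec d) (hμ : μ ≠ 0)
    (σ γ η : ℝ) (hσ : 0 < σ) (hγ : 0 < γ) (hη : 0 < η)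
    (w : Inp d) (hw : w ∈ W1 d) :
    AccP (Pc2 d μ σ γ η) w ≤
      AccP (Pc2 d μ σ γ η)
        ((1 / (vnorm μ * Real.sqrt (1 + γ ^ 2))) • ((μ, -γ • μ, (0 : Vec d)) : Inp d)) := by
  classical
  have hSp : 0 < ∑ i, μ i ^ 2 := by
    rcases Function.ne_iff.1 hμ with ⟨i, hi⟩
    refine Finset.sum_pos' (fun j _ => sq_nonneg _) ⟨i, Finset.mem_univ i, by
      have h := pow_pos (abs_pos.2 hi) 2
      rwa [sq_abs] at h⟩
  have hL : 0 < vnorm μ := by unfold vnorm; exact Real.sqrt_pos.2 hSp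
  set L := vnorm μ with hLdef
  have hL2 : L ^ 2 = ∑ i, μ i ^ 2 := by rw [hLdef]; unfold vnorm; exact Real.sq_sqrt hSp.le
  have h1γ : (0:ℝ) < 1 + γ := by linarith
  have h1γ2 : (0:ℝ) < 1 + γ ^ 2 := by positivity
  set M := L * Real.sqrt (1 + γ) / σ with hMdef
  have hM0 : 0 ≤ M := by positivity
  set r := 1 / (L * Real.sqrt (1 + γ ^ 2)) with hrdef
  have hr : 0 < r := by positivity
  set wst := ((1 / (vnorm μ * Real.sqrt (1 + γ ^ 2))) • ((μ, -γ • μ, (0 : Vec d)) : Inp d))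
    with hwstdef
  -- sums for wst
  have hA1 : ∑ i, wst.1 i * μ i = r * ∑ i, μ i ^ 2 := by
    rw [Finset.mul_sum]
    refine Finset.sum_congr rfl fun i _ => ?_
    show (r * μ i) * μ i = r * μ i ^ 2
    ring
  have hA2 : ∑ i, wst.2.1 i * μ i = -(γ * r * ∑ i, μ i ^ 2) := by
    rw [Finset.mul_sum, ← Finset.sum_neg_distrib]
    refine Finset.sum_congr rfl fun i _ => ?_
    show (r * (-γ * μ i)) * μ i = -(γ * r * μ i ^ 2)
    ring
  have hA3 : ∑ i, wst.2.2 i * μ i = 0 := by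
    refine Finset.sum_eq_zero fun i _ => ?_
    show (r * 0) * μ i = 0
    ring
  have hB1 : ∑ i, wst.1 i ^ 2 = r ^ 2 * ∑ i, μ i ^ 2 := by
    rw [Finset.mul_sum]
    refine Finset.sum_congr rfl fun i _ => ?_
    show (r * μ i) ^ 2 = r ^ 2 * μ i ^ 2
    ring
  have hB2 : ∑ i, wst.2.1 i ^ 2 = γ ^ 2 * r ^ 2 * ∑ i, μ i ^ 2 := by
    rw [Finset.mul_sum]
    refine Finset.sum_congr rfl fun i _ => ?_
    show (r * (-γ * μ i)) ^ 2 = γ ^ 2 * r ^ 2 * μ i ^ 2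
    ring
  have hB3 : ∑ i, wst.2.2 i ^ 2 = 0 := by
    refine Finset.sum_eq_zero fun i _ => ?_
    show (r * 0) ^ 2 = 0
    ring
  have hVst : Vof d σ γ η wst = (r * L * σ) ^ 2 * (1 + γ) := by
    unfold Vof
    rw [hB1, hB2, hB3, ← hL2]
    field_simp
    ring
  have hVstpos : 0 < Vof d σ γ η wst := by rw [hVst]; positivity
  have hsqVst : Real.sqrt (Vof d σ γ η wst) = r * L * σ * Real.sqrt (1 + γ) := by
    rw [hVst, Real.sqrt_mul (sq_nonneg _), Real.sqrt_sq (by positivity)]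
  have hmean1 : meanY d μ wst 1 = r * L ^ 2 * (1 + γ) := by
    unfold meanY
    rw [hA1, hA2, hA3, ← hL2]
    ring
  have hmean2 : meanY d μ wst (-1) = -(r * L ^ 2 * (1 + γ)) := by
    unfold meanY
    rw [hA1, hA2, hA3, ← hL2]
    ring
  have hsq1γ : Real.sqrt (1 + γ) * Real.sqrt (1 + γ) = 1 + γ := Real.mul_self_sqrt h1γ.le
  have hMst : meanY d μ wst 1 / Real.sqrt (Vof d σ γ η wst) = M := by
    rw [hmean1, hsqVst, hMdef, div_eq_div_iff (by positivity : (0:ℝ) < r * L * σ * Real.sqrt (1 + γ)).ne' hσ.ne']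
    linear_combination (-(r * L ^ 2 * σ)) * hsq1γ
  have hMst2 : -(meanY d μ wst (-1)) / Real.sqrt (Vof d σ γ η wst) = M := by
    rw [hmean2, neg_neg, ← hmean1, hMst]
  have hRHS : AccP (Pc2 d μ σ γ η) wst = Phi M := by
    rw [AccP_pos μ hσ hγ hη wst hVstpos, hMst, hMst2]
    ring
  rw [hRHS]
  by_cases hVw : Vof d σ γ η w = 0
  · rw [AccP_degenerate μ hσ hγ hη w hVw]
    exact Phi_nonneg M
  · have hVwpos : 0 < Vof d σ γ η w :=
      lt_of_le_of_ne (Vof_nonneg hσ hγ hη w) (Ne.symm hVw)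
    have hsVw : 0 < Real.sqrt (Vof d σ γ η w) := Real.sqrt_pos.2 hVwpos
    rw [AccP_pos μ hσ hγ hη w hVwpos]
    have hCS := CS_bound μ hσ hγ hη w
    have hpq : meanY d μ w 1 / Real.sqrt (Vof d σ γ η w)
        + -(meanY d μ w (-1)) / Real.sqrt (Vof d σ γ η w) ≤ 2 * M := by
      rw [← add_div, div_le_iff₀ hsVw]
      have e : meanY d μ w 1 + -(meanY d μ w (-1))
          = 2 * ((∑ i, w.1 i * μ i) - (∑ i, w.2.1 i * μ i)) := by
        unfold meanY; ring
      rw [e, hMdef]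
      linarith [hCS]
    have hkey := Phi_key hM0 hpq
    linarith
end
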